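/- Let G be a finite group and K ⊴ H ≤ G with H/K cyclic, let A ⊴ H and D = K ∩ A. Then ε(A,D) = ε(H,K) + e for some central idempotent e of ℚH orthogonal to ε(H,K); in particular ε(H,K)·ε(A,D) = ε(H,K) in ℚH. -/

import Mathlib

open scoped BigOperators
noncomputable section
open scoped Classical
set_option linter.unusedSectionVars false
namespace SP
variable {G : Type} [Group G] [Fintype G]

def hsum (k : Type) [Field k] (H : Subgroup G) : MonoidAlgebra k G :=
  ∑ h ∈ (Set.toFinite (H : Set G)).toFinset, MonoidAlgebra.single h 1

/-- `Ĥ = (1/|H|) ∑_{h∈H} h` in the group algebra. -/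
def hat (k : Type) [Field k] (H : Subgroup G) : MonoidAlgebra k G :=
  (Nat.card H : k)⁻¹ • hsum k H

lemma commute_single_hsum (k : Type) [Field k] {L : Subgroup G} {h : G}
    (hh : ∀ l ∈ L, h * l * h⁻¹ ∈ L) (hh' : ∀ l ∈ L, h⁻¹ * l * h ∈ L) :
    Commute (MonoidAlgebra.single h (1 : k)) (hsum k L) := by
  unfold hsum
  rw [Commute, SemiconjBy, Finset.mul_sum, Finset.sum_mul]
  refine Finset.sum_nbij' (fun x => h * x * h⁻¹) (fun y => h⁻¹ * y * h) ?_ ?_ ?_ ?_ ?_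
  · intro x hx
    simp only [Set.Finite.mem_toFinset, SetLike.mem_coe] at hx ⊢
    exact hh x hx
  · intro y hy
    simp only [Set.Finite.mem_toFinset, SetLike.mem_coe] at hy ⊢
    exact hh' y hy
  · intro x _; group
  · intro y _; group
  · intro x _
    rw [MonoidAlgebra.single_mul_single, MonoidAlgebra.single_mul_single]
    congr 1
    group

lemma normal_conj {H L : Subgroup G} (hLH : L ≤ H) (hn : (L.subgroupOf H).Normal) :
    ∀ x ∈ H, ∀ l ∈ L, x * l * x⁻¹ ∈ L := by
  intro x hx l hl
  have hl' : (⟨l, hLH hl⟩ : H) ∈ L.subgroupOf H := Subgroup.mem_subgroupOf.2 hl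
  have := hn.conj_mem _ hl' ⟨x, hx⟩
  rw [Subgroup.mem_subgroupOf] at this
  simpa using this

lemma commute_hat_hat (k : Type) [Field k] {H L M : Subgroup G}
    (hM : M ≤ H) (hL : ∀ x ∈ H, ∀ l ∈ L, x * l * x⁻¹ ∈ L) :
    Commute (hat k L) (hat k M) := by
  unfold hat
  rw [Commute, SemiconjBy, smul_mul_smul_comm, smul_mul_smul_comm, mul_comm]
  congr 1
  refine (Commute.sum_right _ _ _ ?_)
  intro m hm
  simp only [Set.Finite.mem_toFinset, SetLike.mem_coe] at hm
  exact (commute_single_hsum k (fun l hl => hL m (hM hm) l hl)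
    (fun l hl => by simpa using hL m⁻¹ (hM (inv_mem hm)) l hl)).symm

/-- minimal normal subgroups of `H` containing `K` properly -/
def minNormalAbove (H K : Subgroup G) : Set (Subgroup G) :=
  {L | K < L ∧ L ≤ H ∧ (L.subgroupOf H).Normal ∧
    ∀ M : Subgroup G, M ≤ H → (M.subgroupOf H).Normal → K < M → M ≤ L → M = L}

/-- `ε(H,K)` -/
def eps (k : Type) [Field k] (H K : Subgroup G) : MonoidAlgebra k G :=
  if H = K then hat k K
  else Finset.noncommProd (Set.toFinite (minNormalAbove H K)).toFinset
    (fun L => hat k K - hat k L) (by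
      intro L hL M hM _
      simp only [Finset.mem_coe, Set.Finite.mem_toFinset] at hL hM
      obtain ⟨hKL, hLH, hLn, -⟩ := hL
      obtain ⟨hKM, hMH, hMn, -⟩ := hM
      have hKH : K ≤ H := hKL.le.trans hLH
      have cLM : Commute (hat k L) (hat k M) := commute_hat_hat k hMH (normal_conj hLH hLn)
      have cKM : Commute (hat k K) (hat k M) :=
        ((commute_hat_hat k hKH (normal_conj hMH hMn))).symm
      have cLK : Commute (hat k L) (hat k K) := commute_hat_hat k hKH (normal_conj hLH hLn)
      have cKK : Commute (hat k K) (hat k K) := Commute.refl _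
      exact (cKK.sub_left cLK).sub_right (cKM.sub_left cLM))




/-! ### Auxiliary lemmas -/

lemma card_toFinset_eq (P : Subgroup G) :
    (Set.toFinite (P : Set G)).toFinset.card = Nat.card P := by
  rw [Set.Finite.card_toFinset, ← Set.toFinset_card]
  simp [Nat.card_eq_fintype_card]

lemma card_q_ne (P : Subgroup G) : ((Nat.card P : ℚ)) ≠ 0 := by
  have : 0 < Nat.card P := Nat.card_pos
  exact_mod_cast this.ne'

lemma single_mul_hsum {P : Subgroup G} {x : G} (hx : x ∈ P) :
    MonoidAlgebra.single x (1 : ℚ) * hsum ℚ P = hsum ℚ P := by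
  unfold hsum
  rw [Finset.mul_sum]
  refine Finset.sum_nbij' (fun p => x * p) (fun p => x⁻¹ * p) ?_ ?_ ?_ ?_ ?_
  · intro p hp
    simp only [Set.Finite.mem_toFinset, SetLike.mem_coe] at hp ⊢
    exact mul_mem hx hp
  · intro p hp
    simp only [Set.Finite.mem_toFinset, SetLike.mem_coe] at hp ⊢
    exact mul_mem (inv_mem hx) hp
  · intro p _; group
  · intro p _; group
  · intro p _
    rw [MonoidAlgebra.single_mul_single, one_mul]

lemma hsum_mul_single {P : Subgroup G} {x : G} (hx : x ∈ P) :
    hsum ℚ P * MonoidAlgebra.single x (1 : ℚ) = hsum ℚ P := by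
  unfold hsum
  rw [Finset.sum_mul]
  refine Finset.sum_nbij' (fun p => p * x) (fun p => p * x⁻¹) ?_ ?_ ?_ ?_ ?_
  · intro p hp
    simp only [Set.Finite.mem_toFinset, SetLike.mem_coe] at hp ⊢
    exact mul_mem hp hx
  · intro p hp
    simp only [Set.Finite.mem_toFinset, SetLike.mem_coe] at hp ⊢
    exact mul_mem hp (inv_mem hx)
  · intro p _; group
  · intro p _; group
  · intro p _
    rw [MonoidAlgebra.single_mul_single, one_mul]

lemma single_mul_hat {P : Subgroup G} {x : G} (hx : x ∈ P) :
    MonoidAlgebra.single x (1 : ℚ) * hat ℚ P = hat ℚ P := by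
  unfold hat
  rw [mul_smul_comm, single_mul_hsum hx]

lemma hat_mul_single {P : Subgroup G} {x : G} (hx : x ∈ P) :
    hat ℚ P * MonoidAlgebra.single x (1 : ℚ) = hat ℚ P := by
  unfold hat
  rw [smul_mul_assoc, hsum_mul_single hx]

lemma hat_mul_hat_of_le {P Q : Subgroup G} (h : P ≤ Q) :
    hat ℚ P * hat ℚ Q = hat ℚ Q := by
  have h1 : hsum ℚ P * hat ℚ Q = (Nat.card P : ℚ) • hat ℚ Q := by
    unfold hsum
    rw [Finset.sum_mul]
    rw [Finset.sum_congr rfl (fun p hp => by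
      simp only [Set.Finite.mem_toFinset, SetLike.mem_coe] at hp
      exact single_mul_hat (h hp))]
    rw [Finset.sum_const, card_toFinset_eq, ← Nat.cast_smul_eq_nsmul ℚ]
  show (Nat.card P : ℚ)⁻¹ • hsum ℚ P * hat ℚ Q = hat ℚ Q
  rw [smul_mul_assoc, h1, smul_smul, inv_mul_cancel₀ (card_q_ne P), one_smul]

lemma hat_mul_hat_of_le' {P Q : Subgroup G} (h : P ≤ Q) :
    hat ℚ Q * hat ℚ P = hat ℚ Q := by
  have h1 : hat ℚ Q * hsum ℚ P = (Nat.card P : ℚ) • hat ℚ Q := by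
    unfold hsum
    rw [Finset.mul_sum]
    rw [Finset.sum_congr rfl (fun p hp => by
      simp only [Set.Finite.mem_toFinset, SetLike.mem_coe] at hp
      exact hat_mul_single (h hp))]
    rw [Finset.sum_const, card_toFinset_eq, ← Nat.cast_smul_eq_nsmul ℚ]
  show hat ℚ Q * ((Nat.card P : ℚ)⁻¹ • hsum ℚ P) = hat ℚ Q
  rw [mul_smul_comm, h1, smul_smul, inv_mul_cancel₀ (card_q_ne P), one_smul]

lemma hat_idem (P : Subgroup G) : hat ℚ P * hat ℚ P = hat ℚ P :=
  hat_mul_hat_of_le le_rfl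

lemma commute_single_hat {L : Subgroup G} {h : G}
    (hh : ∀ l ∈ L, h * l * h⁻¹ ∈ L) (hh' : ∀ l ∈ L, h⁻¹ * l * h ∈ L) :
    Commute (MonoidAlgebra.single h (1 : ℚ)) (hat ℚ L) := by
  unfold hat
  exact (commute_single_hsum ℚ hh hh').smul_right _

/-- supported in `H` -/
def sptIn (H : Subgroup G) (x : MonoidAlgebra ℚ G) : Prop :=
  ∀ g : G, g ∉ H → x.coeff g = 0

lemma sptIn_one (H : Subgroup G) : sptIn H (1 : MonoidAlgebra ℚ G) := by
  intro g hg
  have hne : g ≠ 1 := by rintro rfl; exact hg (one_mem H)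
  show (MonoidAlgebra.single 1 (1:ℚ)).coeff g = 0
  rw [MonoidAlgebra.coeff_single, Finsupp.single_apply, if_neg (fun h => hne h.symm)]

lemma sptIn_sub {H : Subgroup G} {x y : MonoidAlgebra ℚ G}
    (hx : sptIn H x) (hy : sptIn H y) : sptIn H (x - y) := by
  intro g hg
  rw [MonoidAlgebra.coeff_sub, Finsupp.sub_apply, hx g hg, hy g hg, sub_zero]

lemma sptIn_smul {H : Subgroup G} {x : MonoidAlgebra ℚ G} (c : ℚ)
    (hx : sptIn H x) : sptIn H (c • x) := by
  intro g hg
  rw [MonoidAlgebra.coeff_smul_apply, hx g hg, smul_zero]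

lemma sptIn_mul {H : Subgroup G} {x y : MonoidAlgebra ℚ G}
    (hx : sptIn H x) (hy : sptIn H y) : sptIn H (x * y) := by
  intro g hg
  by_contra hne
  have hg' : g ∈ (x * y).coeff.support := Finsupp.mem_support_iff.2 hne
  have := MonoidAlgebra.support_coeff_mul_subset x y hg'
  rw [Finset.mem_mul] at this
  obtain ⟨a, ha, b, hb, hab⟩ := this
  have haH : a ∈ H := by
    by_contra h
    exact (Finsupp.mem_support_iff.1 ha) (hx a h)
  have hbH : b ∈ H := by
    by_contra h
    exact (Finsupp.mem_support_iff.1 hb) (hy b h)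
  exact hg (hab ▸ mul_mem haH hbH)

lemma sptIn_hsum {H P : Subgroup G} (h : P ≤ H) : sptIn H (hsum ℚ P) := by
  intro g hg
  unfold hsum
  rw [MonoidAlgebra.coeff_sum, Finset.sum_apply']
  refine Finset.sum_eq_zero (fun p hp => ?_)
  simp only [Set.Finite.mem_toFinset, SetLike.mem_coe] at hp
  have : p ≠ g := by rintro rfl; exact hg (h hp)
  rw [MonoidAlgebra.coeff_single_apply, if_neg this]

lemma sptIn_hat {H P : Subgroup G} (h : P ≤ H) : sptIn H (hat ℚ P) :=
  sptIn_smul _ (sptIn_hsum h)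

lemma sptIn_noncommProd {H : Subgroup G} {α : Type} (s : Finset α)
    (f : α → MonoidAlgebra ℚ G) (comm)
    (hf : ∀ a ∈ s, sptIn H (f a)) :
    sptIn H (s.noncommProd f comm) := by
  induction s using Finset.cons_induction with
  | empty => simpa using sptIn_one H
  | cons a s ha ih =>
    rw [Finset.noncommProd_cons]
    exact sptIn_mul (hf a (Finset.mem_cons_self a s))
      (ih _ (fun b hb => hf b (Finset.mem_cons.2 (Or.inr hb))))

lemma sptIn_eps {H A D : Subgroup G} (hDA : D ≤ A) (hAH : A ≤ H) :
    sptIn H (eps ℚ A D) := by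
  unfold eps
  split
  · exact sptIn_hat (hDA.trans hAH)
  · exact sptIn_noncommProd _ _ _ (fun L hL => by
      simp only [Set.Finite.mem_toFinset] at hL
      exact sptIn_sub (sptIn_hat (hDA.trans hAH)) (sptIn_hat (hL.2.1.trans hAH)))

lemma sptIn_mul_comm {H : Subgroup G} {x y : MonoidAlgebra ℚ G}
    (hy : ∀ g ∈ H, Commute (MonoidAlgebra.single g (1:ℚ)) y)
    (hx : sptIn H x) : x * y = y * x := by
  conv_lhs => rw [← MonoidAlgebra.sum_coeff_single x]
  conv_rhs => rw [← MonoidAlgebra.sum_coeff_single x]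
  rw [Finsupp.sum, Finset.sum_mul, Finset.mul_sum]
  refine Finset.sum_congr rfl (fun g hg => ?_)
  have hgH : g ∈ H := by
    by_contra h
    exact (Finsupp.mem_support_iff.1 hg) (hx g h)
  have h1 : MonoidAlgebra.single g (x.coeff g) = (x.coeff g) • MonoidAlgebra.single g (1:ℚ) := by
    rw [MonoidAlgebra.smul_single, smul_eq_mul, mul_one]
  rw [h1, smul_mul_assoc, mul_smul_comm, (hy g hgH).eq]

lemma exists_min_aux {H K : Subgroup G} :
    ∀ n (N : Subgroup G), Nat.card N = n → N ≤ H → (N.subgroupOf H).Normal → K < N →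
      ∃ L ∈ minNormalAbove H K, L ≤ N := by
  intro n
  induction n using Nat.strong_induction_on with
  | _ n ih =>
    intro N hcard hNH hNn hKN
    by_cases hmin : ∀ M : Subgroup G, M ≤ H → (M.subgroupOf H).Normal → K < M → M ≤ N → M = N
    · exact ⟨N, ⟨hKN, hNH, hNn, hmin⟩, le_rfl⟩
    · push_neg at hmin
      obtain ⟨M, hMH, hMn, hKM, hMN, hne⟩ := hmin
      have hlt : (M : Set G) ⊂ (N : Set G) := by
        rw [Set.ssubset_iff_of_subset hMN]
        obtain ⟨x, hxN, hxM⟩ := SetLike.exists_of_lt (lt_of_le_of_ne hMN hne)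
        exact ⟨x, hxN, hxM⟩
      have hcardlt : Nat.card M < n :=
        hcard ▸ Set.Finite.card_lt_card (Set.toFinite _) hlt
      obtain ⟨L, hL, hLM⟩ := ih _ hcardlt M rfl hMH hMn hKM
      exact ⟨L, hL, hLM.trans hMN⟩

lemma exists_min {H K : Subgroup G} (hKH : K ≤ H) (hne : H ≠ K) :
    ∃ L ∈ minNormalAbove H K, True := by
  have hKlt : K < H := lt_of_le_of_ne hKH (Ne.symm hne)
  have hHn : (H.subgroupOf H).Normal := by
    rw [Subgroup.subgroupOf_self]; infer_instance
  obtain ⟨L, hL, -⟩ := exists_min_aux (Nat.card H) H rfl le_rfl hHn hKlt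
  exact ⟨L, hL, trivial⟩

lemma pairwise_commute_min (H K : Subgroup G) :
    ((Set.toFinite (minNormalAbove H K)).toFinset : Set (Subgroup G)).Pairwise
      fun L M => Commute (hat ℚ K - hat ℚ L) (hat ℚ K - hat ℚ M) := by
  intro L hL M hM _
  simp only [Finset.mem_coe, Set.Finite.mem_toFinset] at hL hM
  obtain ⟨hKL, hLH, hLn, -⟩ := hL
  obtain ⟨hKM, hMH, hMn, -⟩ := hM
  have hKH : K ≤ H := hKL.le.trans hLH
  have cLM : Commute (hat ℚ L) (hat ℚ M) := commute_hat_hat ℚ hMH (normal_conj hLH hLn)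
  have cKM : Commute (hat ℚ K) (hat ℚ M) :=
    ((commute_hat_hat ℚ hKH (normal_conj hMH hMn))).symm
  have cLK : Commute (hat ℚ L) (hat ℚ K) := commute_hat_hat ℚ hKH (normal_conj hLH hLn)
  have cKK : Commute (hat ℚ K) (hat ℚ K) := Commute.refl _
  exact (cKK.sub_left cLK).sub_right (cKM.sub_left cLM)

lemma eps_mul_hat_of_min {H K L : Subgroup G} (hL : L ∈ minNormalAbove H K) :
    eps ℚ H K * hat ℚ L = 0 := by
  have hne : H ≠ K := by
    rintro rfl
    exact absurd (hL.1.trans_le hL.2.1) (lt_irrefl _)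
  rw [eps, if_neg hne]
  show (Set.toFinite (minNormalAbove H K)).toFinset.noncommProd (fun L => hat ℚ K - hat ℚ L)
    (pairwise_commute_min H K) * hat ℚ L = 0
  have hmem : L ∈ (Set.toFinite (minNormalAbove H K)).toFinset := by simpa using hL
  rw [← Finset.noncommProd_erase_mul _ hmem _ _, mul_assoc, sub_mul,
    hat_mul_hat_of_le hL.1.le, hat_idem, sub_self, mul_zero]

lemma eps_mul_hatK {H K : Subgroup G} (hKH : K ≤ H) :
    eps ℚ H K * hat ℚ K = eps ℚ H K := by
  by_cases hne : H = K
  · rw [eps, if_pos hne, hat_idem]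
  · obtain ⟨L, hL, -⟩ := exists_min hKH hne
    rw [eps, if_neg hne]
    show (Set.toFinite (minNormalAbove H K)).toFinset.noncommProd (fun L => hat ℚ K - hat ℚ L)
      (pairwise_commute_min H K) * hat ℚ K = (Set.toFinite (minNormalAbove H K)).toFinset.noncommProd
      (fun L => hat ℚ K - hat ℚ L) (pairwise_commute_min H K)
    have hmem : L ∈ (Set.toFinite (minNormalAbove H K)).toFinset := by simpa using hL
    rw [← Finset.noncommProd_erase_mul _ hmem _ _, mul_assoc, sub_mul,
      hat_idem, hat_mul_hat_of_le' hL.1.le]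

lemma eps_idem (H K : Subgroup G) : eps ℚ H K * eps ℚ H K = eps ℚ H K := by
  by_cases hne : H = K
  · rw [eps, if_pos hne, hat_idem]
  · rw [eps, if_neg hne]
    rw [← Finset.noncommProd_mul_distrib _ _ (pairwise_commute_min H K)
      (pairwise_commute_min H K) (pairwise_commute_min H K)]
    refine Finset.noncommProd_congr rfl (fun L hL => ?_) _
    simp only [Set.Finite.mem_toFinset] at hL
    have hKL : K ≤ L := hL.1.le
    show (hat ℚ K - hat ℚ L) * (hat ℚ K - hat ℚ L) = hat ℚ K - hat ℚ L
    rw [sub_mul, mul_sub, mul_sub, hat_idem, hat_idem,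
      hat_mul_hat_of_le hKL, hat_mul_hat_of_le' hKL, sub_self, sub_zero]

lemma hat_absorb {H K M L : Subgroup G}
    (hKc : ∀ x ∈ H, ∀ k ∈ K, x * k * x⁻¹ ∈ K) (hMH : M ≤ H)
    (hL : ∀ l ∈ L, ∃ k ∈ K, ∃ m ∈ M, l = k * m) :
    hat ℚ L * (hat ℚ K * hat ℚ M) = hat ℚ K * hat ℚ M := by
  have key : ∀ l ∈ L, MonoidAlgebra.single l (1:ℚ) * (hat ℚ K * hat ℚ M)
      = hat ℚ K * hat ℚ M := by
    intro l hl
    obtain ⟨k, hk, m, hm, rfl⟩ := hL l hl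
    have hsingle : MonoidAlgebra.single (k * m) (1:ℚ)
        = MonoidAlgebra.single k 1 * MonoidAlgebra.single m 1 := by
      rw [MonoidAlgebra.single_mul_single, one_mul]
    have hcomm : Commute (MonoidAlgebra.single m (1:ℚ)) (hat ℚ K) :=
      commute_single_hat (fun x hx => hKc m (hMH hm) x hx)
        (fun x hx => by simpa using hKc m⁻¹ (inv_mem (hMH hm)) x hx)
    rw [hsingle, mul_assoc, ← mul_assoc (MonoidAlgebra.single m 1), hcomm.eq,
      mul_assoc, single_mul_hat hm, ← mul_assoc, single_mul_hat hk]
  have h1 : hsum ℚ L * (hat ℚ K * hat ℚ M)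
      = (Nat.card L : ℚ) • (hat ℚ K * hat ℚ M) := by
    unfold hsum
    rw [Finset.sum_mul, Finset.sum_congr rfl (fun l hl => by
      simp only [Set.Finite.mem_toFinset, SetLike.mem_coe] at hl
      exact key l hl), Finset.sum_const, card_toFinset_eq, ← Nat.cast_smul_eq_nsmul ℚ]
  show (Nat.card L : ℚ)⁻¹ • hsum ℚ L * (hat ℚ K * hat ℚ M) = hat ℚ K * hat ℚ M
  rw [smul_mul_assoc, h1, smul_smul, inv_mul_cancel₀ (card_q_ne L), one_smul]

lemma commutator_mem {H K : Subgroup G} (hKH : K ≤ H) (hKn : (K.subgroupOf H).Normal)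
    (hcyc : IsCyclic (H ⧸ K.subgroupOf H)) {h m : G} (hh : h ∈ H) (hm : m ∈ H) :
    h * m * h⁻¹ * m⁻¹ ∈ K := by
  letI : CommGroup (H ⧸ K.subgroupOf H) := IsCyclic.commGroup
  have hmem : h * m * h⁻¹ * m⁻¹ ∈ H :=
    mul_mem (mul_mem (mul_mem hh hm) (inv_mem hh)) (inv_mem hm)
  have h2 : (⟨h * m * h⁻¹ * m⁻¹, hmem⟩ : H) ∈ K.subgroupOf H := by
    rw [← QuotientGroup.eq_one_iff]
    have heq : (⟨h * m * h⁻¹ * m⁻¹, hmem⟩ : H)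
        = ⟨h, hh⟩ * ⟨m, hm⟩ * (⟨h, hh⟩ : H)⁻¹ * (⟨m, hm⟩ : H)⁻¹ := rfl
    rw [heq]
    have hcomm : ∀ a b : H ⧸ K.subgroupOf H, a * b * a⁻¹ * b⁻¹ = 1 := by
      intro a b; rw [mul_comm a b]; group
    have : ((⟨h, hh⟩ * ⟨m, hm⟩ * (⟨h, hh⟩ : H)⁻¹ * (⟨m, hm⟩ : H)⁻¹ : H) : H ⧸ K.subgroupOf H)
        = ((⟨h, hh⟩ : H) : H ⧸ K.subgroupOf H) * ((⟨m, hm⟩ : H) : H ⧸ K.subgroupOf H)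
          * (((⟨h, hh⟩ : H) : H ⧸ K.subgroupOf H))⁻¹ * (((⟨m, hm⟩ : H) : H ⧸ K.subgroupOf H))⁻¹ := by
      rfl
    rw [this, hcomm]
  exact Subgroup.mem_subgroupOf.mp h2

/-- the product set `KM` as a subgroup, when `M` normalises `K` -/
def mulSub (K M : Subgroup G) (hc : ∀ m ∈ M, ∀ k ∈ K, m * k * m⁻¹ ∈ K) : Subgroup G where
  carrier := {x | ∃ k ∈ K, ∃ m ∈ M, x = k * m}
  one_mem' := ⟨1, one_mem K, 1, one_mem M, (one_mul 1).symm⟩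
  mul_mem' := by
    rintro a b ⟨k1, hk1, m1, hm1, rfl⟩ ⟨k2, hk2, m2, hm2, rfl⟩
    exact ⟨k1 * (m1 * k2 * m1⁻¹), mul_mem hk1 (hc m1 hm1 k2 hk2),
      m1 * m2, mul_mem hm1 hm2, by group⟩
  inv_mem' := by
    rintro a ⟨k, hk, m, hm, rfl⟩
    exact ⟨m⁻¹ * k⁻¹ * m, by simpa using hc m⁻¹ (inv_mem hm) k⁻¹ (inv_mem hk),
      m⁻¹, inv_mem hm, by group⟩

lemma mem_mulSub {K M : Subgroup G} {hc} {x : G} :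
    x ∈ mulSub K M hc ↔ ∃ k ∈ K, ∃ m ∈ M, x = k * m := Iff.rfl

lemma eps_mul_eps (H K A : Subgroup G) (hKH : K ≤ H) (hKn : (K.subgroupOf H).Normal)
    (hcyc : IsCyclic (H ⧸ K.subgroupOf H)) (hAH : A ≤ H) (hAn : (A.subgroupOf H).Normal) :
    eps ℚ H K * eps ℚ A (K ⊓ A) = eps ℚ H K := by
  have hKc : ∀ x ∈ H, ∀ k ∈ K, x * k * x⁻¹ ∈ K := normal_conj hKH hKn
  have hepsD : eps ℚ H K * hat ℚ (K ⊓ A) = eps ℚ H K := by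
    calc eps ℚ H K * hat ℚ (K ⊓ A) = eps ℚ H K * hat ℚ K * hat ℚ (K ⊓ A) := by
          rw [eps_mul_hatK hKH]
      _ = eps ℚ H K * (hat ℚ K * hat ℚ (K ⊓ A)) := by rw [mul_assoc]
      _ = eps ℚ H K * hat ℚ K := by rw [hat_mul_hat_of_le' inf_le_left]
      _ = eps ℚ H K := eps_mul_hatK hKH
  have hepsM : ∀ M ∈ minNormalAbove A (K ⊓ A), eps ℚ H K * hat ℚ M = 0 := by
    intro M hM
    obtain ⟨hDM, hMA, hMn, -⟩ := hM
    have hMH : M ≤ H := hMA.trans hAH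
    set N : Subgroup G := mulSub K M (fun m hm k hk => hKc m (hMH hm) k hk) with hNdef
    have hKN : K ≤ N := fun k hk => mem_mulSub.mpr ⟨k, hk, 1, one_mem M, (mul_one k).symm⟩
    have hNH : N ≤ H := by
      rintro x hx
      obtain ⟨k, hk, m, hm, rfl⟩ := mem_mulSub.mp hx
      exact mul_mem (hKH hk) (hMH hm)
    have hNn : (N.subgroupOf H).Normal := by
      constructor
      intro n hn x
      rw [Subgroup.mem_subgroupOf] at hn ⊢
      obtain ⟨k, hk, m, hm, heq⟩ := mem_mulSub.mp hn
      have hxH : (x : G) ∈ H := x.2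
      have hcm : (x : G) * m * (x : G)⁻¹ * m⁻¹ ∈ K :=
        commutator_mem hKH hKn hcyc hxH (hMH hm)
      refine mem_mulSub.mpr ⟨((x : G) * k * (x : G)⁻¹) * ((x : G) * m * (x : G)⁻¹ * m⁻¹),
        mul_mem (hKc x hxH k hk) hcm, m, hm, ?_⟩
      have hxn : ((x * n * x⁻¹ : H) : G) = (x : G) * (n : G) * (x : G)⁻¹ := rfl
      rw [hxn, heq]
      group
    have hKltN : K < N := by
      obtain ⟨m, hmM, hmD⟩ := SetLike.exists_of_lt hDM
      have hmK : m ∉ K := fun h => hmD (Subgroup.mem_inf.2 ⟨h, hMA hmM⟩)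
      refine lt_of_le_of_ne hKN (fun h => hmK ?_)
      rw [h]
      exact mem_mulSub.mpr ⟨1, one_mem K, m, hmM, (one_mul m).symm⟩
    obtain ⟨L, hLmin, hLN⟩ := exists_min_aux (Nat.card N) N rfl hNH hNn hKltN
    have habs : hat ℚ L * (hat ℚ K * hat ℚ M) = hat ℚ K * hat ℚ M :=
      hat_absorb hKc hMH (fun l hl => mem_mulSub.mp (hLN hl))
    calc eps ℚ H K * hat ℚ M = eps ℚ H K * hat ℚ K * hat ℚ M := by
          rw [eps_mul_hatK hKH]
      _ = eps ℚ H K * (hat ℚ K * hat ℚ M) := by rw [mul_assoc]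
      _ = eps ℚ H K * (hat ℚ L * (hat ℚ K * hat ℚ M)) := by rw [habs]
      _ = eps ℚ H K * hat ℚ L * (hat ℚ K * hat ℚ M) := by rw [mul_assoc]
      _ = 0 := by rw [eps_mul_hat_of_min hLmin, zero_mul]
  by_cases hADeq : A = K ⊓ A
  · have h2 : eps ℚ A (K ⊓ A) = hat ℚ (K ⊓ A) := by rw [eps, if_pos hADeq]
    rw [h2]
    exact hepsD
  · have main : ∀ (s : Finset (Subgroup G)),
        (↑s : Set (Subgroup G)) ⊆ minNormalAbove A (K ⊓ A) → ∀ comm,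
        eps ℚ H K * s.noncommProd (fun L => hat ℚ (K ⊓ A) - hat ℚ L) comm = eps ℚ H K := by
      intro s
      induction s using Finset.cons_induction with
      | empty => intro _ _; simpa using mul_one (eps ℚ H K)
      | cons a s ha ih =>
        intro hsub comm
        rw [Finset.noncommProd_cons, ← mul_assoc]
        have haM : a ∈ minNormalAbove A (K ⊓ A) := hsub (Finset.mem_cons_self a s)
        have h3 : eps ℚ H K * (hat ℚ (K ⊓ A) - hat ℚ a) = eps ℚ H K := by
          rw [mul_sub, hepsD, hepsM a haM, sub_zero]
        rw [h3]
        exact ih (fun x hx => hsub (Finset.mem_cons.2 (Or.inr hx))) _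
    have h2 : eps ℚ A (K ⊓ A)
        = (Set.toFinite (minNormalAbove A (K ⊓ A))).toFinset.noncommProd
          (fun L => hat ℚ (K ⊓ A) - hat ℚ L) (by
            have := pairwise_commute_min (G := G) A (K ⊓ A)
            exact this) := by
      rw [eps, if_neg hADeq]
    rw [h2]
    refine main _ ?_ _
    intro x hx
    simp only [Set.Finite.coe_toFinset] at hx
    exact hx

lemma conj_eq (g : G) (x : MonoidAlgebra ℚ G) :
    MonoidAlgebra.single g (1:ℚ) * x * MonoidAlgebra.single g⁻¹ (1:ℚ)
      = MonoidAlgebra.domCongr ℚ ℚ (MulAut.conj g) x := by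
  refine MonoidAlgebra.ext (Finsupp.ext fun y => ?_)
  rw [MonoidAlgebra.coeff_mul_single_apply, MonoidAlgebra.coeff_single_mul_apply,
    MonoidAlgebra.coeff_domCongr]
  simp [MulAut.conj, mul_assoc]

lemma card_map_equiv (e : G ≃* G) (P : Subgroup G) :
    Nat.card (P.map e.toMonoidHom) = Nat.card P :=
  (Nat.card_congr (P.equivMapOfInjective e.toMonoidHom e.injective).toEquiv).symm

lemma domCongr_hsum (e : G ≃* G) (P : Subgroup G) :
    MonoidAlgebra.domCongr ℚ ℚ e (hsum ℚ P) = hsum ℚ (P.map e.toMonoidHom) := by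
  unfold hsum
  rw [map_sum]
  refine Finset.sum_nbij' (fun p => e p) (fun q => e.symm q) ?_ ?_ ?_ ?_ ?_
  · intro p hp
    simp only [Set.Finite.mem_toFinset, SetLike.mem_coe] at hp ⊢
    rw [Subgroup.mem_map_equiv]
    simpa using hp
  · intro q hq
    simp only [Set.Finite.mem_toFinset, SetLike.mem_coe] at hq ⊢
    rw [Subgroup.mem_map_equiv] at hq
    exact hq
  · intro p _; simp
  · intro q _; simp
  · intro p _
    rw [MonoidAlgebra.domCongr_single]

lemma domCongr_hat (e : G ≃* G) (P : Subgroup G) :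
    MonoidAlgebra.domCongr ℚ ℚ e (hat ℚ P) = hat ℚ (P.map e.toMonoidHom) := by
  unfold hat
  rw [map_smul, domCongr_hsum, card_map_equiv]

lemma ms_nc_congr {β : Type} [Monoid β] {s t : Multiset β} (h : s = t) (c1 c2) :
    s.noncommProd c1 = t.noncommProd c2 := by subst h; rfl

lemma fs_nc_image {α β : Type} [Monoid β] {s : Finset α} {c : α → α}
    (hinj : Set.InjOn c s) (f : α → β) (comm comm') :
    (s.image c).noncommProd f comm = s.noncommProd (fun a => f (c a)) comm' := by
  show ((s.image c).1.map f).noncommProd _ = ((s.1.map (fun a => f (c a)))).noncommProd _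
  exact ms_nc_congr (by rw [Finset.image_val_of_injOn hinj, Multiset.map_map]; rfl) _ _

lemma mem_conjMap {g x : G} {P : Subgroup G} :
    x ∈ P.map (MulAut.conj g).toMonoidHom ↔ g⁻¹ * x * g ∈ P := by
  rw [Subgroup.mem_map_equiv]
  simp [MulAut.conj]

lemma conjMap_conjMap_inv (g : G) (P : Subgroup G) :
    (P.map (MulAut.conj g).toMonoidHom).map (MulAut.conj g⁻¹).toMonoidHom = P := by
  ext x
  rw [mem_conjMap, mem_conjMap]
  have h : g⁻¹ * ((g⁻¹)⁻¹ * x * g⁻¹) * g = x := by group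
  rw [h]

lemma conjMap_injective (g : G) : Function.Injective
    (fun P : Subgroup G => P.map (MulAut.conj g).toMonoidHom) := by
  intro P Q h
  have := congrArg (fun R : Subgroup G => R.map (MulAut.conj g⁻¹).toMonoidHom) h
  simpa only [conjMap_conjMap_inv] using this

lemma conjMap_fix {H P : Subgroup G} (hPc : ∀ x ∈ H, ∀ p ∈ P, x * p * x⁻¹ ∈ P)
    {g : G} (hg : g ∈ H) : P.map (MulAut.conj g).toMonoidHom = P := by
  ext x
  rw [mem_conjMap]
  constructor
  · intro h
    have h2 := hPc g hg _ h
    have h3 : g * (g⁻¹ * x * g) * g⁻¹ = x := by group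
    rwa [h3] at h2
  · intro h
    have h2 := hPc g⁻¹ (inv_mem hg) x h
    rwa [inv_inv] at h2

lemma conjMap_props {H A D M : Subgroup G}
    (hAc : ∀ x ∈ H, ∀ a ∈ A, x * a * x⁻¹ ∈ A)
    (hDc : ∀ x ∈ H, ∀ d ∈ D, x * d * x⁻¹ ∈ D)
    {g : G} (hg : g ∈ H)
    (hDM : D < M) (hMA : M ≤ A) (hMn : (M.subgroupOf A).Normal) :
    D < M.map (MulAut.conj g).toMonoidHom ∧ M.map (MulAut.conj g).toMonoidHom ≤ A ∧
      ((M.map (MulAut.conj g).toMonoidHom).subgroupOf A).Normal := by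
  have hMc : ∀ x ∈ A, ∀ m ∈ M, x * m * x⁻¹ ∈ M := normal_conj hMA hMn
  refine ⟨?_, ?_, ?_⟩
  · rw [SetLike.lt_iff_le_and_exists]
    constructor
    · intro d hd
      rw [mem_conjMap]
      have h4 := hDc g⁻¹ (inv_mem hg) d hd
      rw [inv_inv] at h4
      exact hDM.le h4
    · obtain ⟨m, hmM, hmD⟩ := SetLike.exists_of_lt hDM
      refine ⟨g * m * g⁻¹, ?_, ?_⟩
      · rw [mem_conjMap]
        have h3 : g⁻¹ * (g * m * g⁻¹) * g = m := by group
        rwa [h3]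
      · intro hmem
        have h2 := hDc g⁻¹ (inv_mem hg) _ hmem
        have h3 : g⁻¹ * (g * m * g⁻¹) * g⁻¹⁻¹ = m := by group
        rw [h3] at h2
        exact hmD h2
  · intro x hx
    rw [mem_conjMap] at hx
    have h2 := hAc g hg _ (hMA hx)
    have h3 : g * (g⁻¹ * x * g) * g⁻¹ = x := by group
    rwa [h3] at h2
  · constructor
    intro n hn a
    rw [Subgroup.mem_subgroupOf, mem_conjMap] at hn ⊢
    have haA : g⁻¹ * (a : G) * g ∈ A := by
      have := hAc g⁻¹ (inv_mem hg) a a.2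
      rwa [inv_inv] at this
    have h2 := hMc _ haA _ hn
    have h3 : g⁻¹ * (a:G) * g * (g⁻¹ * (n:G) * g) * (g⁻¹ * (a:G) * g)⁻¹
        = g⁻¹ * ((a:G) * (n:G) * (a:G)⁻¹) * g := by group
    rw [h3] at h2
    exact h2

lemma conjMap_min {H A D : Subgroup G} (hAH : A ≤ H)
    (hAc : ∀ x ∈ H, ∀ a ∈ A, x * a * x⁻¹ ∈ A)
    (hDc : ∀ x ∈ H, ∀ d ∈ D, x * d * x⁻¹ ∈ D)
    {g : G} (hg : g ∈ H) {M : Subgroup G} (hM : M ∈ minNormalAbove A D) :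
    M.map (MulAut.conj g).toMonoidHom ∈ minNormalAbove A D := by
  obtain ⟨hDM, hMA, hMn, hmin⟩ := hM
  obtain ⟨h1, h2, h3⟩ := conjMap_props hAc hDc hg hDM hMA hMn
  refine ⟨h1, h2, h3, ?_⟩
  intro M' hM'A hM'n hDM' hM'le
  have hM''le : M'.map (MulAut.conj g⁻¹).toMonoidHom ≤ M := by
    intro x hx
    rw [mem_conjMap, inv_inv] at hx
    have := hM'le hx
    rw [mem_conjMap] at this
    have h4 : g⁻¹ * (g * x * g⁻¹) * g = x := by group
    rwa [h4] at this
  obtain ⟨h1', h2', h3'⟩ := conjMap_props hAc hDc (inv_mem hg) hDM' hM'A hM'n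
  have heq := hmin _ h2' h3' h1' hM''le
  have := congrArg (fun R : Subgroup G => R.map (MulAut.conj g).toMonoidHom) heq
  rw [← this]
  have h5 := conjMap_conjMap_inv g⁻¹ M'
  rw [inv_inv] at h5
  rw [h5]

lemma eps_comm_single {H A D : Subgroup G} (hDA : D ≤ A) (hAH : A ≤ H)
    (hAc : ∀ x ∈ H, ∀ a ∈ A, x * a * x⁻¹ ∈ A)
    (hDc : ∀ x ∈ H, ∀ d ∈ D, x * d * x⁻¹ ∈ D)
    {g : G} (hg : g ∈ H) :
    MonoidAlgebra.single g (1:ℚ) * eps ℚ A D = eps ℚ A D * MonoidAlgebra.single g (1:ℚ) := by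
  suffices h : MonoidAlgebra.single g (1:ℚ) * eps ℚ A D * MonoidAlgebra.single g⁻¹ (1:ℚ)
      = eps ℚ A D by
    have h2 := congrArg (fun z => z * MonoidAlgebra.single g (1:ℚ)) h
    rw [mul_assoc (MonoidAlgebra.single g (1:ℚ) * eps ℚ A D),
      MonoidAlgebra.single_mul_single, inv_mul_cancel, one_mul,
      ← MonoidAlgebra.one_def, mul_one] at h2
    exact h2
  rw [conj_eq]
  by_cases hAD : A = D
  · rw [eps, if_pos hAD, domCongr_hat, conjMap_fix hDc hg]
  · rw [eps, if_neg hAD]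
    have himg : (Set.toFinite (minNormalAbove A D)).toFinset.image
        (fun L => Subgroup.map (MulAut.conj g).toMonoidHom L)
        = (Set.toFinite (minNormalAbove A D)).toFinset := by
      refine Finset.eq_of_subset_of_card_le ?_ ?_
      · intro x hx
        obtain ⟨M, hM, rfl⟩ := Finset.mem_image.mp hx
        simp only [Set.Finite.mem_toFinset] at hM ⊢
        exact conjMap_min hAH hAc hDc hg hM
      · rw [Finset.card_image_of_injective _ (conjMap_injective g)]
    show MonoidAlgebra.domCongr ℚ ℚ (MulAut.conj g) ((Set.toFinite (minNormalAbove A D)).toFinset.noncommProd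
      (fun L => hat ℚ D - hat ℚ L) (pairwise_commute_min A D)) = (Set.toFinite (minNormalAbove A D)).toFinset.noncommProd
      (fun L => hat ℚ D - hat ℚ L) (pairwise_commute_min A D)
    rw [Finset.map_noncommProd]
    calc (Set.toFinite (minNormalAbove A D)).toFinset.noncommProd
          (fun L => MonoidAlgebra.domCongr ℚ ℚ (MulAut.conj g) (hat ℚ D - hat ℚ L)) _
        = (Set.toFinite (minNormalAbove A D)).toFinset.noncommProd
          (fun L => hat ℚ D - hat ℚ (Subgroup.map (MulAut.conj g).toMonoidHom L))
          (by
            intro x hx y hy hxy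
            have hc := pairwise_commute_min (G := G) A D
            rw [← himg] at hc
            exact hc (by
                exact Finset.mem_coe.mpr (Finset.mem_image_of_mem _ (Finset.mem_coe.mp hx)))
              (by
                exact Finset.mem_coe.mpr (Finset.mem_image_of_mem _ (Finset.mem_coe.mp hy)))
              (fun hh => hxy (conjMap_injective g hh))) := by
          refine Finset.noncommProd_congr rfl (fun L hL => ?_) _
          rw [map_sub, domCongr_hat, domCongr_hat, conjMap_fix hDc hg]
      _ = ((Set.toFinite (minNormalAbove A D)).toFinset.image
            (fun L => Subgroup.map (MulAut.conj g).toMonoidHom L)).noncommProd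
          (fun L => hat ℚ D - hat ℚ L)
          (by rw [himg]; exact pairwise_commute_min (G := G) A D) := by
          exact (fs_nc_image (fun x _ y _ hh => conjMap_injective g hh)
            (fun L => hat ℚ D - hat ℚ L) _ _).symm
      _ = (Set.toFinite (minNormalAbove A D)).toFinset.noncommProd
          (fun L => hat ℚ D - hat ℚ L) (pairwise_commute_min (G := G) A D) := by
          exact Finset.noncommProd_congr himg (fun _ _ => rfl) _
/-- Let `K ⊴ H ≤ G` with `H/K` cyclic, `A ⊴ H` and `D = K ∩ A`.  Then
`ε(A,D) = ε(H,K) + e` for some central idempotent `e` of `ℚH` orthogonal to `ε(H,K)`;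
in particular `ε(H,K)·ε(A,D) = ε(H,K)`. -/
theorem eps_decomposition (G : Type) [Group G] [Fintype G]
    (H K A : Subgroup G) (hKH : K ≤ H) (hKn : (K.subgroupOf H).Normal)
    (hcyc : IsCyclic (H ⧸ K.subgroupOf H))
    (hAH : A ≤ H) (hAn : (A.subgroupOf H).Normal) :
    ∃ e : MonoidAlgebra ℚ G,
      eps ℚ A (K ⊓ A) = eps ℚ H K + e ∧
      e * e = e ∧
      (∀ g : G, g ∉ H → e.coeff g = 0) ∧
      (∀ g ∈ H, MonoidAlgebra.single g (1 : ℚ) * e = e * MonoidAlgebra.single g 1) ∧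
      e * eps ℚ H K = 0 ∧ eps ℚ H K * e = 0 ∧
      eps ℚ H K * eps ℚ A (K ⊓ A) = eps ℚ H K := by
  have hKc : ∀ x ∈ H, ∀ k ∈ K, x * k * x⁻¹ ∈ K := normal_conj hKH hKn
  have hAc : ∀ x ∈ H, ∀ a ∈ A, x * a * x⁻¹ ∈ A := normal_conj hAH hAn
  have hDc : ∀ x ∈ H, ∀ d ∈ K ⊓ A, x * d * x⁻¹ ∈ K ⊓ A := by
    intro x hx d hd
    exact Subgroup.mem_inf.2 ⟨hKc x hx d (Subgroup.mem_inf.1 hd).1,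
      hAc x hx d (Subgroup.mem_inf.1 hd).2⟩
  have hHc : ∀ x ∈ H, ∀ a ∈ H, x * a * x⁻¹ ∈ H :=
    fun x hx a ha => mul_mem (mul_mem hx ha) (inv_mem hx)
  have hba : eps ℚ H K * eps ℚ A (K ⊓ A) = eps ℚ H K :=
    eps_mul_eps H K A hKH hKn hcyc hAH hAn
  have hbcomm : ∀ g ∈ H, Commute (MonoidAlgebra.single g (1:ℚ)) (eps ℚ H K) :=
    fun g hg => eps_comm_single hKH le_rfl hHc hKc hg
  have hacomm : ∀ g ∈ H, Commute (MonoidAlgebra.single g (1:ℚ)) (eps ℚ A (K ⊓ A)) :=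
    fun g hg => eps_comm_single inf_le_right hAH hAc hDc hg
  have hspt : sptIn H (eps ℚ A (K ⊓ A)) := sptIn_eps inf_le_right hAH
  have hsptb : sptIn H (eps ℚ H K) := sptIn_eps hKH le_rfl
  have hab : eps ℚ A (K ⊓ A) * eps ℚ H K = eps ℚ H K := by
    rw [sptIn_mul_comm hbcomm hspt]
    exact hba
  refine ⟨eps ℚ A (K ⊓ A) - eps ℚ H K, by abel, ?_, ?_, ?_, ?_, ?_, hba⟩
  · rw [sub_mul, mul_sub, mul_sub, eps_idem A (K ⊓ A), eps_idem H K, hab, hba,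
      sub_self, sub_zero]
  · intro g hg
    rw [MonoidAlgebra.coeff_sub, Finsupp.sub_apply, hspt g hg, hsptb g hg, sub_zero]
  · intro g hg
    rw [mul_sub, sub_mul, (hacomm g hg).eq, (hbcomm g hg).eq]
  · rw [sub_mul, hab, eps_idem H K, sub_self]
  · rw [mul_sub, hba, eps_idem H K, sub_self]

end SP
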